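/- arXiv:0801.2336 — 3 statements merged into one kernel-verified Lean document; each statement's English description precedes it below -/
import Mathlib

section
/- For any weighted graph and any finite sets A ⊂ B ⊂ Γ, the smallest Dirichlet eigenvalue λ(B) of −Δ on B, the resistance ρ(A, Γ∖B), and the measure μ(A) satisfy λ(B) · ρ(A, Γ∖B) · μ(A) ≤ 1. -/
open scoped ENNReal Classical BigOperators

/-- A weighted graph: symmetric nonnegative edge weights, no loops. -/
structure WGraph (V : Type) where
  w : V → V → ℝ
  symm : ∀ x y, w x y = w y x
  nonneg : ∀ x y, 0 ≤ w x y
  loopless : ∀ x, w x x = 0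

namespace WGraph

variable {V : Type} (G : WGraph V)

/-- The underlying simple graph: `x ∼ y` iff `w x y > 0`. -/
def toSimpleGraph : SimpleGraph V where
  Adj x y := x ≠ y ∧ 0 < G.w x y
  symm := ⟨fun x y h => ⟨h.1.symm, G.symm x y ▸ h.2⟩⟩
  loopless := ⟨fun x h => h.1 rfl⟩

def Adj (x y : V) : Prop := G.toSimpleGraph.Adj x y

/-- Shortest-path graph distance. -/
noncomputable def dist (x y : V) : ℕ := G.toSimpleGraph.dist x y

/-- Vertex measure `μ(x) = Σ_{y} w x y`. -/
noncomputable def mu (x : V) : ℝ≥0∞ := ∑' y, ENNReal.ofReal (G.w x y)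

/-- Measure of a set of vertices. -/
noncomputable def muSet (A : Set V) : ℝ≥0∞ := ∑' y : A, G.mu (y : V)

/-- Open ball of radius `R`. -/
def ball (x : V) (R : ℝ) : Set V := {y | (G.dist x y : ℝ) < R}

/-- Sphere of radius `R`. -/
def sphere (x : V) (R : ℝ) : Set V := {y | (G.dist x y : ℝ) = R}

/-- External boundary of a set. -/
def extBoundary (A : Set V) : Set V := {y | y ∉ A ∧ ∃ z ∈ A, G.Adj z y}

/-- Volume `V(x,R) = μ(B(x,R))`. -/
noncomputable def vol (x : V) (R : ℝ) : ℝ≥0∞ := G.muSet (G.ball x R)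

/-- Annulus volume `v(x,r,R) = V(x,R) - V(x,r)`. -/
noncomputable def annv (x : V) (r R : ℝ) : ℝ≥0∞ := G.vol x R - G.vol x r

/-- Transition kernel `P(x,y) = w x y / μ(x)`. -/
noncomputable def kernel (x y : V) : ℝ≥0∞ := ENNReal.ofReal (G.w x y) / G.mu x

/-- Iterates of the kernel killed outside `A`. -/
noncomputable def killedP (A : Set V) : ℕ → V → V → ℝ≥0∞
  | 0, x, y => if x = y ∧ x ∈ A then 1 else 0
  | n + 1, x, y =>
      ∑' z, killedP A n x z * (if z ∈ A ∧ y ∈ A then G.kernel z y else 0)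

/-- Green function of the walk killed on exiting `A`. -/
noncomputable def green (A : Set V) (x y : V) : ℝ≥0∞ := ∑' n, G.killedP A n x y

/-- Green kernel `g^A(x,y) = G^A(x,y)/μ(y)`. -/
noncomputable def greenK (A : Set V) (x y : V) : ℝ≥0∞ := G.green A x y / G.mu y

/-- Mean exit time from `A` started at `x`: `E_x(T_A) = Σ_y G^A(x,y)`. -/
noncomputable def exitE (A : Set V) (x : V) : ℝ≥0∞ := ∑' y, G.green A x y

/-- `E(x,R)`: mean exit time from the ball `B(x,R)` started at its center. -/
noncomputable def E (x : V) (R : ℝ) : ℝ≥0∞ := G.exitE (G.ball x R) x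

/-- Maximal mean exit time `Ē(x,R)`. -/
noncomputable def Ebar (x : V) (R : ℝ) : ℝ≥0∞ :=
  ⨆ z ∈ G.ball x R, G.exitE (G.ball x R) z

/-- Dirichlet energy `(-Δ f, f)_μ = (1/2) Σ_{x,y} w x y (f x - f y)²`. -/
noncomputable def energy (f : V → ℝ) : ℝ≥0∞ :=
  (∑' p : V × V, ENNReal.ofReal (G.w p.1 p.2 * (f p.1 - f p.2) ^ 2)) / 2

/-- Capacity between `A` and `B`. -/
noncomputable def capacity (A B : Set V) : ℝ≥0∞ :=
  ⨅ (f : V → ℝ) (_ : (∀ x ∈ A, f x = 1) ∧ (∀ x ∈ B, f x = 0)), G.energy f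

/-- Effective resistance `ρ(A,B)`. -/
noncomputable def resistance (A B : Set V) : ℝ≥0∞ := (G.capacity A B)⁻¹

/-- Annulus resistance `ρ(x,r,R)`. -/
noncomputable def rho (x : V) (r R : ℝ) : ℝ≥0∞ :=
  G.resistance (G.ball x r) (G.ball x R)ᶜ

/-- `‖f‖²_μ`. -/
noncomputable def norm2 (f : V → ℝ) : ℝ≥0∞ :=
  ∑' x, ENNReal.ofReal ((f x) ^ 2) * G.mu x

/-- Smallest Dirichlet eigenvalue of `-Δ` on `A` (Rayleigh quotient). -/
noncomputable def lam (A : Set V) : ℝ≥0∞ :=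
  ⨅ (f : V → ℝ) (_ : (∀ x, x ∉ A → f x = 0) ∧ f ≠ 0), G.energy f / G.norm2 f

/-- Condition `(p₀)`: controlled weights. -/
def P0 (p : ℝ) : Prop :=
  ∀ x y, G.Adj x y → ENNReal.ofReal p * G.mu x ≤ ENNReal.ofReal (G.w x y)

/-- Volume doubling. -/
def VD (D : ℝ) : Prop :=
  ∀ x : V, ∀ R : ℝ, 0 < R → G.vol x (2 * R) ≤ ENNReal.ofReal D * G.vol x R

/-- Time comparison principle. -/
def TC (C : ℝ) : Prop :=
  ∀ x : V, ∀ R : ℝ, 0 < R → ∀ y ∈ G.ball x R,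
    G.E x (2 * R) ≤ ENNReal.ofReal C * G.E y R

/-- Time doubling. -/
def TD (D : ℝ) : Prop :=
  ∀ x : V, ∀ R : ℝ, 0 < R → G.E x (2 * R) ≤ ENNReal.ofReal D * G.E x R

/-- Weak time comparison. -/
def WTC (C : ℝ) : Prop :=
  ∀ x : V, ∀ R : ℝ, 0 < R → ∀ y ∈ G.ball x R,
    G.E x R ≤ ENNReal.ofReal C * G.E y R

/-- Weak volume comparison. -/
def WVC (C : ℝ) : Prop :=
  ∀ x : V, ∀ R : ℝ, 0 < R → ∀ y ∈ G.ball x R,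
    G.vol x R ≤ ENNReal.ofReal C * G.vol y R

/-- Bounded covering condition. -/
def BC (K : ℕ) : Prop :=
  ∀ x : V, ∀ R : ℝ, 0 < R → ∃ s : Finset V, s.card ≤ K ∧
    G.ball x (2 * R) ⊆ ⋃ y ∈ s, G.ball y R

end WGraph
/-- `λ(B) · ρ(A, Γ∖B) · μ(A) ≤ 1` for finite `A ⊆ B`. -/
theorem stmt5 (V : Type) (G : WGraph V) (A B : Set V)
    (hA : A.Finite) (hB : B.Finite) (hAB : A ⊆ B) :
    G.lam B * G.resistance A Bᶜ * G.muSet A ≤ 1 := by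
  have key : G.lam B * G.muSet A ≤ G.capacity A Bᶜ := by
    rw [WGraph.capacity]
    refine le_iInf₂ fun f hf => ?_
    rcases Set.eq_empty_or_nonempty A with hAe | ⟨a, ha⟩
    · simp [WGraph.muSet, hAe]
    · have hfne : f ≠ 0 := by
        intro h
        have := hf.1 a ha
        rw [h] at this
        simp at this
      have hlam : G.lam B ≤ G.energy f / G.norm2 f := by
        refine iInf₂_le f ⟨fun x hx => hf.2 x hx, hfne⟩
      have hmu : G.muSet A ≤ G.norm2 f := by
        have h1 : G.muSet A = ∑' y : A, ENNReal.ofReal (f y ^ 2) * G.mu y := by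
          refine tsum_congr fun ⟨y, hy⟩ => ?_
          simp [hf.1 y hy]
        rw [h1, WGraph.norm2]
        refine (tsum_subtype A fun y => ENNReal.ofReal (f y ^ 2) * G.mu y).trans_le ?_
        exact ENNReal.tsum_le_tsum fun x =>
          Set.indicator_le_self A (fun y => ENNReal.ofReal (f y ^ 2) * G.mu y) x
      calc G.lam B * G.muSet A ≤ (G.energy f / G.norm2 f) * G.norm2 f :=
            mul_le_mul' hlam hmu
        _ = G.norm2 f * (G.energy f / G.norm2 f) := mul_comm _ _
        _ ≤ G.energy f := ENNReal.mul_div_le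
  have : G.lam B * G.resistance A Bᶜ * G.muSet A
      = G.lam B * G.muSet A * (G.capacity A Bᶜ)⁻¹ := by
    rw [WGraph.resistance]; ring
  rw [this]
  calc G.lam B * G.muSet A * (G.capacity A Bᶜ)⁻¹
      ≤ G.capacity A Bᶜ * (G.capacity A Bᶜ)⁻¹ := mul_le_mul_left key _
    _ ≤ 1 := ENNReal.mul_inv_le_one _
end

section
/- If (p₀) and volume doubling (VD) hold, then there is c > 0 such that λ^{−1}(x,R) ≥ c R² for all x ∈ Γ and R > 0, where λ(x,R) is the smallest Dirichlet eigenvalue of −Δ on B(x,R). -/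
open scoped ENNReal Classical BigOperators

/-- `(p₀)+(VD)` imply `λ⁻¹(x,R) ≥ c R²`. -/
theorem stmt17 (V : Type) [Infinite V] (G : WGraph V)
    (hconn : G.toSimpleGraph.Connected)
    (p₀ : ℝ) (hp : 0 < p₀) (h0 : G.P0 p₀)
    (hVD : ∃ D : ℝ, 0 < D ∧ G.VD D) :
    ∃ c : ℝ, 0 < c ∧ ∀ (x : V) (R : ℝ), 0 < R →
      ENNReal.ofReal (c * R ^ 2) ≤ (G.lam (G.ball x R))⁻¹ := by
  classical
  obtain ⟨D, hD, hVDD⟩ := hVD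
  refine ⟨1 / (4 * D), by positivity, fun x R hR => ?_⟩
  -- every vertex has an adjacent vertex, hence positive measure
  have hmu : ∀ y : V, 0 < G.mu y := by
    intro y
    obtain ⟨z, hz⟩ := exists_ne y
    obtain ⟨p⟩ := hconn.preconnected y z
    have hnil : ¬ p.Nil := SimpleGraph.Walk.not_nil_of_ne (Ne.symm hz)
    have hadj : y ≠ p.getVert 1 ∧ 0 < G.w y (p.getVert 1) := p.adj_snd hnil
    calc (0:ℝ≥0∞) < ENNReal.ofReal (G.w y (p.getVert 1)) := ENNReal.ofReal_pos.mpr hadj.2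
      _ ≤ G.mu y := ENNReal.le_tsum _
  set B : Set V := G.ball x R with hB
  set f : V → ℝ := fun y => max (R - (G.dist x y : ℝ)) 0 with hf
  have hfy' : ∀ y, f y = max (R - (G.dist x y : ℝ)) 0 := fun y => rfl
  have hfx : f x = R := by
    have hd0 : G.dist x x = 0 := SimpleGraph.dist_self
    rw [hfy' x, hd0]
    norm_num [max_eq_left hR.le]
  have hf0 : ∀ y, y ∉ B → f y = 0 := by
    intro y hy
    simp only [hB, WGraph.ball, Set.mem_setOf_eq, not_lt] at hy
    rw [hfy' y]
    exact max_eq_right (by linarith)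
  have hLip : ∀ y z : V, G.toSimpleGraph.Adj y z → (f y - f z) ^ 2 ≤ 1 := by
    intro y z hadj
    have hn1 : G.dist x z ≤ G.dist x y + 1 := by
      have ht := hconn.dist_triangle (u := x) (v := y) (w := z)
      have h1 : G.toSimpleGraph.dist y z = 1 := SimpleGraph.dist_eq_one_iff_adj.mpr hadj
      show G.toSimpleGraph.dist x z ≤ G.toSimpleGraph.dist x y + 1
      omega
    have hn2 : G.dist x y ≤ G.dist x z + 1 := by
      have ht := hconn.dist_triangle (u := x) (v := z) (w := y)
      have h1 : G.toSimpleGraph.dist z y = 1 := SimpleGraph.dist_eq_one_iff_adj.mpr hadj.symm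
      show G.toSimpleGraph.dist x y ≤ G.toSimpleGraph.dist x z + 1
      omega
    have hr1 : (G.dist x z : ℝ) ≤ (G.dist x y : ℝ) + 1 := by exact_mod_cast hn1
    have hr2 : (G.dist x y : ℝ) ≤ (G.dist x z : ℝ) + 1 := by exact_mod_cast hn2
    have habs : |f y - f z| ≤ 1 := by
      rw [hfy' y, hfy' z]
      refine le_trans (abs_max_sub_max_le_abs _ _ _) ?_
      exact abs_le.mpr ⟨by linarith, by linarith⟩
    nlinarith [sq_abs (f y - f z), abs_nonneg (f y - f z)]
  -- energy bound
  have hE : G.energy f ≤ G.vol x R := by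
    rw [WGraph.energy]
    refine ENNReal.div_le_of_le_mul' ?_
    have hpt : ∀ p : V × V, ENNReal.ofReal (G.w p.1 p.2 * (f p.1 - f p.2) ^ 2)
        ≤ (if p.1 ∈ B then ENNReal.ofReal (G.w p.1 p.2) else 0)
          + (if p.2 ∈ B then ENNReal.ofReal (G.w p.1 p.2) else 0) := by
      intro p
      by_cases hzero : f p.1 = 0 ∧ f p.2 = 0
      · simp [hzero.1, hzero.2]
      · by_cases hw : 0 < G.w p.1 p.2
        · have hne : p.1 ≠ p.2 := by
            intro h; rw [h, G.loopless] at hw; exact lt_irrefl _ hw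
          have hadj : G.toSimpleGraph.Adj p.1 p.2 := ⟨hne, hw⟩
          have hsq := hLip p.1 p.2 hadj
          have hle : ENNReal.ofReal (G.w p.1 p.2 * (f p.1 - f p.2) ^ 2)
              ≤ ENNReal.ofReal (G.w p.1 p.2) :=
            ENNReal.ofReal_le_ofReal (by nlinarith [G.nonneg p.1 p.2, sq_nonneg (f p.1 - f p.2)])
          rcases not_and_or.mp hzero with h | h
          · have hmem : p.1 ∈ B := by
              by_contra hc; exact h (hf0 _ hc)
            refine le_trans hle ?_
            rw [if_pos hmem]; exact le_self_add
          · have hmem : p.2 ∈ B := by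
              by_contra hc; exact h (hf0 _ hc)
            refine le_trans hle ?_
            rw [if_pos hmem]; exact le_add_self
        · have hw0 : G.w p.1 p.2 = 0 := le_antisymm (not_lt.mp hw) (G.nonneg _ _)
          simp [hw0]
    have hS1 : (∑' p : V × V, if p.1 ∈ B then ENNReal.ofReal (G.w p.1 p.2) else 0)
        = G.vol x R := by
      have hprod : (∑' p : V × V, if p.1 ∈ B then ENNReal.ofReal (G.w p.1 p.2) else 0)
          = ∑' a : V, ∑' b : V, (if a ∈ B then ENNReal.ofReal (G.w a b) else 0) :=
        ENNReal.tsum_prod (f := fun a b => if a ∈ B then ENNReal.ofReal (G.w a b) else 0)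
      rw [hprod]
      have hcongr : ∀ a : V, (∑' b, if a ∈ B then ENNReal.ofReal (G.w a b) else 0)
          = Set.indicator B G.mu a := by
        intro a
        by_cases ha : a ∈ B
        · simp only [if_pos ha, Set.indicator_of_mem ha]
          rfl
        · simp [ha, Set.indicator_of_notMem ha]
      rw [tsum_congr hcongr, WGraph.vol, WGraph.muSet, ← hB, tsum_subtype]
    have hS2 : (∑' p : V × V, if p.2 ∈ B then ENNReal.ofReal (G.w p.1 p.2) else 0)
        = G.vol x R := by
      have he := Equiv.tsum_eq (Equiv.prodComm V V)
        (fun p : V × V => if p.2 ∈ B then ENNReal.ofReal (G.w p.1 p.2) else 0)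
      rw [← he, ← hS1]
      refine tsum_congr fun p => ?_
      simp only [Equiv.prodComm_apply, Prod.fst_swap, Prod.snd_swap]
      rw [G.symm p.2 p.1]
      congr
    calc (∑' p : V × V, ENNReal.ofReal (G.w p.1 p.2 * (f p.1 - f p.2) ^ 2))
        ≤ ∑' p : V × V, ((if p.1 ∈ B then ENNReal.ofReal (G.w p.1 p.2) else 0)
            + (if p.2 ∈ B then ENNReal.ofReal (G.w p.1 p.2) else 0)) :=
          ENNReal.tsum_le_tsum hpt
      _ = (∑' p : V × V, if p.1 ∈ B then ENNReal.ofReal (G.w p.1 p.2) else 0)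
            + ∑' p : V × V, if p.2 ∈ B then ENNReal.ofReal (G.w p.1 p.2) else 0 :=
          ENNReal.tsum_add
      _ = G.vol x R + G.vol x R := by rw [hS1, hS2]
      _ = 2 * G.vol x R := (two_mul _).symm
  -- norm bound
  have hN : ENNReal.ofReal ((R/2) ^ 2) * G.vol x (R/2) ≤ G.norm2 f := by
    rw [WGraph.vol, WGraph.muSet, ← ENNReal.tsum_mul_left,
      tsum_subtype (G.ball x (R/2)) (fun y => ENNReal.ofReal ((R/2) ^ 2) * G.mu y),
      WGraph.norm2]
    refine ENNReal.tsum_le_tsum fun y => ?_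
    by_cases hy : y ∈ G.ball x (R/2)
    · rw [Set.indicator_of_mem hy]
      have hd : (G.dist x y : ℝ) < R/2 := hy
      have hfyge : R/2 ≤ f y := by
        rw [hfy' y]
        exact le_trans (by linarith) (le_max_left _ _)
      exact mul_le_mul_left (ENNReal.ofReal_le_ofReal
        (pow_le_pow_left₀ (by positivity) hfyge 2)) _
    · rw [Set.indicator_of_notMem hy]; exact zero_le
  -- lam is at most the Rayleigh quotient of f
  have hlam : G.lam B ≤ G.energy f / G.norm2 f := by
    rw [WGraph.lam]
    refine iInf₂_le f ⟨fun y hy => hf0 y hy, ?_⟩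
    intro h
    have hx0 := congrFun h x
    rw [hfx] at hx0
    simp only [Pi.zero_apply] at hx0
    exact hR.ne' hx0
  have hxball : x ∈ G.ball x (R/2) := by
    show (G.dist x x : ℝ) < R/2
    have hd0 : G.dist x x = 0 := SimpleGraph.dist_self
    rw [hd0]; push_cast; linarith
  have hQpos : 0 < G.vol x (R/2) := lt_of_lt_of_le (hmu x) (by
    rw [WGraph.vol, WGraph.muSet]; exact ENNReal.le_tsum (f := fun y : G.ball x (R/2) => G.mu y.1) ⟨x, hxball⟩)
  by_cases hQtop : G.vol x (R/2) = ⊤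
  · have hn : G.norm2 f = ⊤ := by
      rw [hQtop] at hN
      rw [ENNReal.mul_top (ENNReal.ofReal_pos.mpr (by positivity : (0:ℝ) < (R/2) ^ 2)).ne'] at hN
      exact top_le_iff.mp hN
    have hlam0 : G.lam B = 0 := by
      rw [hn] at hlam
      simpa using hlam
    rw [hlam0]
    simp
  · have hQne : G.vol x (R/2) ≠ 0 := hQpos.ne'
    have hvol2 : G.vol x R ≤ ENNReal.ofReal D * G.vol x (R/2) := by
      have h2 : (2:ℝ) * (R/2) = R := by ring
      have hv := hVDD x (R/2) (by linarith)
      rwa [h2] at hv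
    have hlam2 : G.lam B ≤ ENNReal.ofReal (D / (R/2) ^ 2) := by
      refine le_trans hlam ?_
      refine le_trans (ENNReal.div_le_div (le_trans hE hvol2) hN) ?_
      rw [ENNReal.mul_div_mul_right _ _ hQne hQtop,
        ENNReal.ofReal_div_of_pos (by positivity : (0:ℝ) < (R/2) ^ 2)]
    calc ENNReal.ofReal (1 / (4 * D) * R ^ 2)
        = ENNReal.ofReal ((D / (R/2) ^ 2)⁻¹) := by
          congr 1
          field_simp
          ring
      _ = (ENNReal.ofReal (D / (R/2) ^ 2))⁻¹ :=
          ENNReal.ofReal_inv_of_pos (by positivity)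
      _ ≤ (G.lam B)⁻¹ := ENNReal.inv_le_inv.mpr hlam2
end

section
/- If (p₀), (VD) and condition (Ē) hold (i.e. Ē(x,R) ≤ C E(x,R)), then there is c > 0 such that E(x,R) ≥ c R² for all x ∈ Γ and R > 0. -/
open scoped ENNReal Classical BigOperators

set_option maxHeartbeats 1000000

section Aux
variable {V : Type} (G : WGraph V)

lemma mu_pos_of_adj {z y : V} (h : G.Adj z y) : 0 < G.mu z := by
  have h1 : ENNReal.ofReal (G.w z y) ≤ G.mu z := ENNReal.le_tsum y
  have h2 : 0 < ENNReal.ofReal (G.w z y) := by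
    simpa [ENNReal.ofReal_pos] using h.2
  exact lt_of_lt_of_le h2 h1

lemma mu_ne_top_of_adj {p₀ : ℝ} (hp : 0 < p₀) (h0 : G.P0 p₀) {z y : V}
    (h : G.Adj z y) : G.mu z ≠ ⊤ := by
  intro htop
  have := h0 z y h
  rw [htop, ENNReal.mul_top (by simpa [ENNReal.ofReal_eq_zero] using hp.le.lt_of_ne' (by exact hp.ne'))] at this
  · exact (ENNReal.ofReal_ne_top) (top_le_iff.mp this)

lemma exists_adj [Infinite V] (hconn : G.toSimpleGraph.Connected) (z : V) :
    ∃ y, G.Adj z y := by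
  obtain ⟨y, hy⟩ := exists_ne z
  obtain ⟨p⟩ := hconn z y
  cases p with
  | nil => exact absurd rfl hy
  | cons h _ => exact ⟨_, h⟩


lemma nbhd_finite {p₀ : ℝ} (hp : 0 < p₀) (h0 : G.P0 p₀) (z : V) :
    {y | G.Adj z y}.Finite := by
  by_contra hinf
  replace hinf : {y | G.Adj z y}.Infinite := hinf
  obtain ⟨y₀, hy₀⟩ := hinf.nonempty
  have hμpos := mu_pos_of_adj G hy₀
  have hμtop := mu_ne_top_of_adj G hp h0 hy₀
  obtain ⟨t, hts, htc⟩ := hinf.exists_subset_card_eq (⌈p₀⁻¹⌉₊ + 1)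
  have h1 : (t.card : ℝ≥0∞) * (ENNReal.ofReal p₀ * G.mu z) ≤ G.mu z := by
    calc (t.card : ℝ≥0∞) * (ENNReal.ofReal p₀ * G.mu z)
        = ∑ _y ∈ t, ENNReal.ofReal p₀ * G.mu z := by
          rw [Finset.sum_const, nsmul_eq_mul]
      _ ≤ ∑ y ∈ t, ENNReal.ofReal (G.w z y) :=
          Finset.sum_le_sum fun y hy => h0 z y (hts hy)
      _ ≤ ∑' y, ENNReal.ofReal (G.w z y) := ENNReal.sum_le_tsum t
      _ = G.mu z := rfl
  have h2 : (t.card : ℝ≥0∞) * ENNReal.ofReal p₀ ≤ 1 := by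
    rw [← ENNReal.mul_le_mul_iff_left hμpos.ne' hμtop, one_mul, mul_assoc]
    exact h1
  have h3 : (t.card : ℝ) * p₀ ≤ 1 := by
    rw [← ENNReal.ofReal_natCast, ← ENNReal.ofReal_mul (by positivity)] at h2
    exact ENNReal.ofReal_le_one.mp h2
  have h4 : (p₀⁻¹ : ℝ) < t.card := by
    rw [htc]; push_cast; linarith [Nat.le_ceil p₀⁻¹]
  have h5 := mul_lt_mul_of_pos_right h4 hp
  rw [inv_mul_cancel₀ hp.ne'] at h5
  linarith


lemma distball_finite [Infinite V] (hconn : G.toSimpleGraph.Connected)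
    {p₀ : ℝ} (hp : 0 < p₀) (h0 : G.P0 p₀) (z : V) :
    ∀ n : ℕ, {y | G.toSimpleGraph.dist z y ≤ n}.Finite := by
  intro n
  induction n with
  | zero =>
    apply (Set.finite_singleton z).subset
    intro y hy
    simp only [Set.mem_setOf_eq, Nat.le_zero] at hy
    exact (hconn.dist_eq_zero_iff.mp hy).symm ▸ rfl
  | succ n ih =>
    apply Set.Finite.subset (ih.union (ih.biUnion (fun u _ => nbhd_finite G hp h0 u)))
    intro y hy
    simp only [Set.mem_setOf_eq] at hy
    by_cases hle : G.toSimpleGraph.dist z y ≤ n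
    · exact Or.inl hle
    · have heq : G.toSimpleGraph.dist y z = n + 1 := by
        rw [SimpleGraph.dist_comm]; omega
      obtain ⟨p, hl⟩ := hconn.exists_walk_length_eq_dist y z
      cases p with
      | nil => simp [SimpleGraph.dist_self] at hle
      | @cons _ u _ h q =>
        have h1 : G.toSimpleGraph.dist z u ≤ n := by
          rw [SimpleGraph.dist_comm]
          have : q.length = n := by
            simp only [SimpleGraph.Walk.length_cons, heq] at hl; omega
          exact this ▸ SimpleGraph.dist_le q
        exact Or.inr (Set.mem_biUnion (x := u) h1 h.symm)
    
lemma ball_finite [Infinite V] (hconn : G.toSimpleGraph.Connected)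
    {p₀ : ℝ} (hp : 0 < p₀) (h0 : G.P0 p₀) (x : V) (R : ℝ) :
    (G.ball x R).Finite := by
  apply (distball_finite G hconn hp h0 x ⌈R⌉₊).subset
  intro y hy
  exact le_of_lt (Nat.lt_ceil.mpr hy)


lemma killedP_zero_right (A : Set V) :
    ∀ (n : ℕ) (x y : V), y ∉ A → G.killedP A n x y = 0 := by
  intro n
  induction n with
  | zero =>
    intro x y hy
    simp only [WGraph.killedP]
    rw [if_neg]
    rintro ⟨rfl, hx⟩; exact hy hx
  | succ n ih =>
    intro x y hy
    simp only [WGraph.killedP]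
    rw [tsum_congr (fun z => by
      rw [if_neg (fun h : z ∈ A ∧ y ∈ A => hy h.2), mul_zero] :
        ∀ z, G.killedP A n x z * (if z ∈ A ∧ y ∈ A then G.kernel z y else 0) = 0)]
    exact tsum_zero

lemma killedP_succ_sum (A : Set V) (s : Finset V) (hsA : (↑s : Set V) = A)
    (n : ℕ) (x y : V) :
    G.killedP A (n+1) x y
      = ∑ z ∈ s, G.killedP A n x z * (if z ∈ A ∧ y ∈ A then G.kernel z y else 0) := by
  simp only [WGraph.killedP]
  exact tsum_eq_sum (fun b hb => by
    rw [killedP_zero_right G A n x b (by rw [← hsA]; simpa using hb), zero_mul])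

/-- The killed transition matrix on a finite set. -/
noncomputable def kmat (G : WGraph V) (s : Finset V) :
    Matrix {v // v ∈ s} {v // v ∈ s} ℝ :=
  Matrix.of fun i j => G.w i j / (G.mu (i : V)).toReal

lemma kmat_nonneg (s : Finset V) (i j : {v // v ∈ s}) : 0 ≤ kmat G s i j :=
  div_nonneg (G.nonneg _ _) ENNReal.toReal_nonneg

lemma kmat_pow_nonneg (s : Finset V) :
    ∀ (n : ℕ) (i j : {v // v ∈ s}), 0 ≤ ((kmat G s) ^ n) i j := by
  intro n
  induction n with
  | zero =>
    intro i j
    rw [pow_zero]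
    by_cases h : i = j <;> simp [Matrix.one_apply, h]
  | succ n ih =>
    intro i j
    rw [pow_succ, Matrix.mul_apply]
    apply Finset.sum_nonneg
    intro k _
    exact mul_nonneg (ih i k) (kmat_nonneg G s k j)

lemma kernel_eq_ofReal (hμ : ∀ v : V, 0 < G.mu v ∧ G.mu v ≠ ⊤) (z y : V) :
    G.kernel z y = ENNReal.ofReal (G.w z y / (G.mu z).toReal) := by
  have hpos : 0 < (G.mu z).toReal := ENNReal.toReal_pos (hμ z).1.ne' (hμ z).2
  rw [WGraph.kernel, ENNReal.ofReal_div_of_pos hpos, ENNReal.ofReal_toReal (hμ z).2]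

lemma killedP_eq_kmat (s : Finset V) (hμ : ∀ v : V, 0 < G.mu v ∧ G.mu v ≠ ⊤) :
    ∀ (n : ℕ) (i j : {v // v ∈ s}),
      G.killedP (↑s) n i j = ENNReal.ofReal (((kmat G s) ^ n) i j) := by
  intro n
  induction n with
  | zero =>
    intro i j
    simp only [WGraph.killedP, pow_zero, Matrix.one_apply]
    by_cases h : i = j
    · rw [if_pos ⟨congrArg Subtype.val h, by simpa using i.2⟩, if_pos h]
      simp
    · rw [if_neg, if_neg h]
      · simp
      · rintro ⟨hval, -⟩
        exact h (Subtype.ext hval)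
  | succ n ih =>
    intro i j
    rw [killedP_succ_sum G (↑s) s rfl n i j, ← Finset.sum_coe_sort,
      pow_succ, Matrix.mul_apply,
      ENNReal.ofReal_sum_of_nonneg (fun k _ =>
        mul_nonneg (kmat_pow_nonneg G s n i k) (kmat_nonneg G s k j))]
    refine Finset.sum_congr rfl (fun k _ => ?_)
    rw [if_pos ⟨by simp [Finset.coe_mem], by simp [Finset.coe_mem]⟩, ih i k,
      kernel_eq_ofReal G hμ (k : V) j,
      ← ENNReal.ofReal_mul (kmat_pow_nonneg G s n i k)]
    rfl


/-- The Green matrix on a finite set. -/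
noncomputable def gmat (G : WGraph V) (s : Finset V) :
    Matrix {v // v ∈ s} {v // v ∈ s} ℝ :=
  Matrix.of fun i j => ∑' n, ((kmat G s) ^ n) i j

section Green
variable (s : Finset V) (hμ : ∀ v : V, 0 < G.mu v ∧ G.mu v ≠ ⊤)
  (hfin : ∀ i : {v // v ∈ s}, G.exitE (↑s) (i : V) ≠ ⊤)

include hfin in
lemma green_ne_top (i j : {v // v ∈ s}) : G.green (↑s) (i : V) (j : V) ≠ ⊤ := by
  intro h
  exact hfin i (top_le_iff.mp (h ▸ ENNReal.le_tsum (j : V)))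

include hμ hfin in
lemma summable_kpow (i j : {v // v ∈ s}) :
    Summable (fun n => ((kmat G s) ^ n) i j) := by
  have h : (∑' n, ENNReal.ofReal (((kmat G s) ^ n) i j)) ≠ ⊤ := by
    rw [tsum_congr (fun n => (killedP_eq_kmat G s hμ n i j).symm)]
    exact green_ne_top G s hfin i j
  have h2 := ENNReal.summable_toReal h
  exact h2.congr (fun n => ENNReal.toReal_ofReal (kmat_pow_nonneg G s n i j))

include hμ hfin in
lemma green_eq_gmat (i j : {v // v ∈ s}) :
    G.green (↑s) (i : V) (j : V) = ENNReal.ofReal (gmat G s i j) := by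
  rw [WGraph.green, tsum_congr (fun n => killedP_eq_kmat G s hμ n i j),
    ← ENNReal.ofReal_tsum_of_nonneg (fun n => kmat_pow_nonneg G s n i j)
      (summable_kpow G s hμ hfin i j)]
  rfl

lemma gmat_nonneg (i j : {v // v ∈ s}) : 0 ≤ gmat G s i j :=
  tsum_nonneg (fun n => kmat_pow_nonneg G s n i j)

include hμ hfin in
lemma gmat_mul_inv : gmat G s * (1 - kmat G s) = 1 := by
  ext i j
  rw [Matrix.mul_apply]
  have hstep : ∀ k : {v // v ∈ s}, gmat G s i k * (1 - kmat G s) k j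
      = ∑' n, (((kmat G s) ^ n) i k * (1 - kmat G s) k j) := by
    intro k
    rw [show gmat G s i k = ∑' n, ((kmat G s) ^ n) i k from rfl, tsum_mul_right]
  rw [Finset.sum_congr rfl (fun k _ => hstep k),
    ← Summable.tsum_finsetSum (fun k _ => (summable_kpow G s hμ hfin i k).mul_right _)]
  have hin : ∀ n : ℕ, (∑ k, ((kmat G s) ^ n) i k * (1 - kmat G s) k j)
      = ((kmat G s) ^ n) i j - ((kmat G s) ^ (n+1)) i j := by
    intro n
    rw [← Matrix.mul_apply, mul_sub, mul_one, ← pow_succ, Matrix.sub_apply]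
  rw [tsum_congr hin]
  have hs1 := summable_kpow G s hμ hfin i j
  have hs2 : Summable (fun n => ((kmat G s) ^ (n+1)) i j) :=
    (summable_nat_add_iff 1).mpr hs1
  rw [Summable.tsum_sub hs1 hs2]
  have h3 := Summable.tsum_eq_zero_add hs1
  have : (∑' n, ((kmat G s) ^ (n+1)) i j)
      = (∑' n, ((kmat G s) ^ n) i j) - ((kmat G s) ^ 0) i j := by
    rw [h3]; ring
  rw [this, pow_zero]
  simp [Matrix.one_apply]

include hμ hfin in
lemma inv_mul_gmat : (1 - kmat G s) * gmat G s = 1 := by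
  ext i j
  rw [Matrix.mul_apply]
  have hstep : ∀ k : {v // v ∈ s}, (1 - kmat G s) i k * gmat G s k j
      = ∑' n, ((1 - kmat G s) i k * ((kmat G s) ^ n) k j) := by
    intro k
    rw [show gmat G s k j = ∑' n, ((kmat G s) ^ n) k j from rfl, tsum_mul_left]
  rw [Finset.sum_congr rfl (fun k _ => hstep k),
    ← Summable.tsum_finsetSum (fun k _ => ((summable_kpow G s hμ hfin k j).mul_left _))]
  have hin : ∀ n : ℕ, (∑ k, (1 - kmat G s) i k * ((kmat G s) ^ n) k j)
      = ((kmat G s) ^ n) i j - ((kmat G s) ^ (n+1)) i j := by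
    intro n
    rw [← Matrix.mul_apply, sub_mul, one_mul, ← pow_succ', Matrix.sub_apply]
  rw [tsum_congr hin]
  have hs1 := summable_kpow G s hμ hfin i j
  have hs2 : Summable (fun n => ((kmat G s) ^ (n+1)) i j) :=
    (summable_nat_add_iff 1).mpr hs1
  rw [Summable.tsum_sub hs1 hs2]
  have h3 := Summable.tsum_eq_zero_add hs1
  have : (∑' n, ((kmat G s) ^ (n+1)) i j)
      = (∑' n, ((kmat G s) ^ n) i j) - ((kmat G s) ^ 0) i j := by
    rw [h3]; ring
  rw [this, pow_zero]
  simp [Matrix.one_apply]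

include hμ in
lemma kmat_pow_symm : ∀ (n : ℕ) (i j : {v // v ∈ s}),
    (G.mu (i : V)).toReal * ((kmat G s) ^ n) i j
      = (G.mu (j : V)).toReal * ((kmat G s) ^ n) j i := by
  intro n
  induction n with
  | zero =>
    intro i j
    by_cases h : i = j
    · rw [h]
    · rw [pow_zero, Matrix.one_apply_ne h, Matrix.one_apply_ne (Ne.symm h)]
      ring
  | succ n ih =>
    intro i j
    have hμk : ∀ k : {v // v ∈ s}, (G.mu (k : V)).toReal ≠ 0 :=
      fun k => (ENNReal.toReal_pos (hμ (k : V)).1.ne' (hμ (k : V)).2).ne'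
    have hk : ∀ k : {v // v ∈ s},
        (G.mu (i : V)).toReal * (((kmat G s) ^ n) i k * kmat G s k j)
          = (G.mu (j : V)).toReal * (kmat G s j k * ((kmat G s) ^ n) k i) := by
      intro k
      have h1 := ih i k
      have e1 : kmat G s k j = G.w (k : V) (j : V) / (G.mu (k : V)).toReal := rfl
      have e2 : kmat G s j k = G.w (j : V) (k : V) / (G.mu (j : V)).toReal := rfl
      calc (G.mu (i : V)).toReal * (((kmat G s) ^ n) i k * kmat G s k j)
          = ((G.mu (i : V)).toReal * ((kmat G s) ^ n) i k) * kmat G s k j := by ring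
        _ = ((G.mu (k : V)).toReal * ((kmat G s) ^ n) k i)
            * (G.w (k : V) (j : V) / (G.mu (k : V)).toReal) := by rw [h1, e1]
        _ = G.w (k : V) (j : V) * ((kmat G s) ^ n) k i := by
            field_simp [hμk k]
            try ring
        _ = G.w (j : V) (k : V) * ((kmat G s) ^ n) k i := by rw [G.symm]
        _ = (G.mu (j : V)).toReal
            * ((G.w (j : V) (k : V) / (G.mu (j : V)).toReal) * ((kmat G s) ^ n) k i) := by
            field_simp [hμk j]
            try ring
        _ = (G.mu (j : V)).toReal * (kmat G s j k * ((kmat G s) ^ n) k i) := by rw [e2]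
    have lhs_eq : (G.mu (i : V)).toReal * ((kmat G s) ^ (n+1)) i j
        = (G.mu (j : V)).toReal * ∑ k, (kmat G s j k * ((kmat G s) ^ n) k i) := by
      rw [pow_succ, Matrix.mul_apply, Finset.mul_sum,
        Finset.sum_congr rfl (fun k _ => hk k), ← Finset.mul_sum]
    have rhs_eq : (∑ k, (kmat G s j k * ((kmat G s) ^ n) k i))
        = ((kmat G s) ^ (n+1)) j i := by
      rw [pow_succ', Matrix.mul_apply]
    rw [lhs_eq, rhs_eq]

include hμ in
lemma gmat_symm (i j : {v // v ∈ s}) :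
    (G.mu (i : V)).toReal * gmat G s i j = (G.mu (j : V)).toReal * gmat G s j i := by
  rw [show gmat G s i j = ∑' n, ((kmat G s) ^ n) i j from rfl,
    show gmat G s j i = ∑' n, ((kmat G s) ^ n) j i from rfl,
    ← tsum_mul_left, ← tsum_mul_left]
  exact tsum_congr (fun n => kmat_pow_symm G s hμ n i j)

include hμ hfin in
lemma gmat_rowsum_le (i : {v // v ∈ s}) :
    ∑ j, gmat G s i j ≤ (G.exitE (↑s) (i : V)).toReal := by
  have h1 : ∀ j : {v // v ∈ s}, gmat G s i j = (G.green (↑s) (i : V) (j : V)).toReal := by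
    intro j
    rw [green_eq_gmat G s hμ hfin i j,
      ENNReal.toReal_ofReal (gmat_nonneg G s i j)]
  rw [Finset.sum_congr rfl (fun j _ => h1 j),
    ← ENNReal.toReal_sum (fun j _ => green_ne_top G s hfin i j)]
  apply ENNReal.toReal_mono (hfin i)
  rw [Finset.sum_coe_sort s (fun v => G.green (↑s) (i : V) v)]
  exact ENNReal.sum_le_tsum s

end Green

end Aux

section Core
variable {ι : Type} [Fintype ι] [DecidableEq ι]

/-- The quadratic form `⟨u, (I-M)v⟩_μ`. -/
noncomputable def bform (M : Matrix ι ι ℝ) (μ : ι → ℝ) (u v : ι → ℝ) : ℝ :=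
  ∑ i, u i * μ i * (v i - M.mulVec v i)

lemma sum_swap_sq (wm : ι → ι → ℝ) (hsym : ∀ i j, wm i j = wm j i) (g : ι → ℝ) :
    ∑ i, ∑ j, wm i j * g j = ∑ i, ∑ j, wm i j * g i := by
  rw [Finset.sum_comm]
  exact Finset.sum_congr rfl fun j _ => Finset.sum_congr rfl fun i _ => by rw [hsym]

lemma bform_expand (M : Matrix ι ι ℝ) (μ : ι → ℝ) (u v : ι → ℝ) :
    bform M μ u v = (∑ i, u i * μ i * v i) - ∑ i, ∑ j, (μ i * M i j) * (u i * v j) := by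
  rw [bform, ← Finset.sum_sub_distrib]
  refine Finset.sum_congr rfl fun i _ => ?_
  simp only [Matrix.mulVec, dotProduct]
  rw [mul_sub]
  congr 1
  rw [Finset.mul_sum]
  exact Finset.sum_congr rfl fun j _ => by ring

lemma bform_symm (M : Matrix ι ι ℝ) (μ : ι → ℝ)
    (hMs : ∀ i j, μ i * M i j = μ j * M j i) (u v : ι → ℝ) :
    bform M μ u v = bform M μ v u := by
  rw [bform_expand, bform_expand]
  congr 1
  · exact Finset.sum_congr rfl fun i _ => by ring
  · rw [Finset.sum_comm]
    refine Finset.sum_congr rfl fun j _ => Finset.sum_congr rfl fun i _ => by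
      rw [hMs]; ring

lemma bform_nonneg (M : Matrix ι ι ℝ) (μ : ι → ℝ)
    (hMs : ∀ i j, μ i * M i j = μ j * M j i)
    (hMnn : ∀ i j, 0 ≤ μ i * M i j)
    (hrowM : ∀ i, ∑ j, μ i * M i j ≤ μ i)
    (v : ι → ℝ) : 0 ≤ bform M μ v v := by
  rw [bform_expand]
  have hswap := sum_swap_sq (fun i j => μ i * M i j) hMs (fun k => v k ^ 2)
  have hsq : 0 ≤ ∑ i, ∑ j, (μ i * M i j) * (v i - v j) ^ 2 :=
    Finset.sum_nonneg fun i _ => Finset.sum_nonneg fun j _ =>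
      mul_nonneg (hMnn i j) (sq_nonneg _)
  have hexp : ∑ i, ∑ j, (μ i * M i j) * (v i - v j) ^ 2
      = (∑ i, ∑ j, (μ i * M i j) * v i ^ 2) + (∑ i, ∑ j, (μ i * M i j) * v j ^ 2)
        - 2 * ∑ i, ∑ j, (μ i * M i j) * (v i * v j) := by
    rw [Finset.sum_congr rfl (fun i _ => Finset.sum_congr rfl (fun j _ =>
      show (μ i * M i j) * (v i - v j) ^ 2
        = (μ i * M i j) * v i ^ 2 + (μ i * M i j) * v j ^ 2
          - 2 * ((μ i * M i j) * (v i * v j)) from by ring))]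
    simp only [Finset.sum_add_distrib, Finset.sum_sub_distrib, Finset.mul_sum]
  have hbound : ∑ i, ∑ j, (μ i * M i j) * v i ^ 2 ≤ ∑ i, μ i * v i ^ 2 := by
    refine Finset.sum_le_sum fun i _ => ?_
    rw [← Finset.sum_mul]
    exact mul_le_mul_of_nonneg_right (hrowM i) (sq_nonneg _)
  have hdiag : ∑ i, v i * μ i * v i = ∑ i, μ i * v i ^ 2 :=
    Finset.sum_congr rfl fun i _ => by ring
  linarith

lemma sum_half_symm (wm : ι → ι → ℝ) (hsym : ∀ i j, wm i j = wm j i) (a : ι → ℝ) :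
    ∑ i, ∑ j, wm i j * ((a i + a j) / 2) = ∑ i, ∑ j, wm i j * a i := by
  have h1 : ∀ i j : ι, wm i j * ((a i + a j) / 2)
      = (wm i j / 2) * a i + (wm i j / 2) * a j := fun i j => by ring
  simp only [h1, Finset.sum_add_distrib]
  rw [sum_swap_sq (fun i j => wm i j / 2) (fun i j => congrArg (· / 2) (hsym i j)) a]
  rw [← Finset.sum_add_distrib]
  refine Finset.sum_congr rfl fun i _ => ?_
  rw [← Finset.sum_add_distrib]
  exact Finset.sum_congr rfl fun j _ => by ring

lemma bform_sub_expand (M : Matrix ι ι ℝ) (μ : ι → ℝ) (f g : ι → ℝ) (t : ℝ) :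
    bform M μ (f - t • g) (f - t • g)
      = bform M μ f f - t * (bform M μ f g + bform M μ g f)
        + t ^ 2 * bform M μ g g := by
  have hmv : ∀ i, M.mulVec (f - t • g) i = M.mulVec f i - t * M.mulVec g i := by
    intro i
    rw [Matrix.mulVec_sub, Matrix.mulVec_smul, Pi.sub_apply, Pi.smul_apply, smul_eq_mul]
  simp only [bform, Finset.mul_sum, Finset.sum_add_distrib, Finset.sum_sub_distrib,
    ← Finset.sum_add_distrib, ← Finset.sum_sub_distrib]
  refine Finset.sum_congr rfl fun i _ => ?_
  rw [hmv, Pi.sub_apply, Pi.smul_apply, smul_eq_mul]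
  ring

lemma bform_cs (M : Matrix ι ι ℝ) (μ : ι → ℝ)
    (hMs : ∀ i j, μ i * M i j = μ j * M j i)
    (hMnn : ∀ i j, 0 ≤ μ i * M i j)
    (hrowM : ∀ i, ∑ j, μ i * M i j ≤ μ i)
    (f g : ι → ℝ) :
    bform M μ f g ^ 2 ≤ bform M μ f f * bform M μ g g := by
  have hq : ∀ t : ℝ, 0 ≤ bform M μ g g * (t * t) + (-(2 * bform M μ f g)) * t
      + bform M μ f f := by
    intro t
    have h0 := bform_nonneg M μ hMs hMnn hrowM (f - t • g)
    rw [bform_sub_expand M μ f g t, bform_symm M μ hMs g f] at h0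
    nlinarith [h0]
  have hd := discrim_le_zero hq
  rw [discrim] at hd
  nlinarith [hd]

lemma bform_dirichlet (M : Matrix ι ι ℝ) (μ : ι → ℝ)
    (hMs : ∀ i j, μ i * M i j = μ j * M j i) (f : ι → ℝ) :
    bform M μ f f = (∑ i, ∑ j, (μ i * M i j) * (f i - f j) ^ 2) / 2
      + ∑ i, f i ^ 2 * (μ i - ∑ j, μ i * M i j) := by
  rw [bform_expand]
  have hswap := sum_swap_sq (fun i j => μ i * M i j) hMs (fun k => f k ^ 2)
  have e1 : ∑ i, ∑ j, (μ i * M i j) * (f i - f j) ^ 2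
      = (∑ i, ∑ j, (μ i * M i j) * f i ^ 2) + (∑ i, ∑ j, (μ i * M i j) * f j ^ 2)
        - 2 * ∑ i, ∑ j, (μ i * M i j) * (f i * f j) := by
    rw [Finset.sum_congr rfl (fun i _ => Finset.sum_congr rfl (fun j _ =>
      show (μ i * M i j) * (f i - f j) ^ 2
        = (μ i * M i j) * f i ^ 2 + (μ i * M i j) * f j ^ 2
          - 2 * ((μ i * M i j) * (f i * f j)) from by ring))]
    simp only [Finset.sum_add_distrib, Finset.sum_sub_distrib, Finset.mul_sum]
  have e2 : ∑ i, f i ^ 2 * (μ i - ∑ j, μ i * M i j)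
      = (∑ i, f i ^ 2 * μ i) - ∑ i, ∑ j, (μ i * M i j) * f i ^ 2 := by
    rw [← Finset.sum_sub_distrib]
    refine Finset.sum_congr rfl fun i _ => ?_
    rw [mul_sub, Finset.mul_sum]
    congr 1
    exact Finset.sum_congr rfl fun j _ => by ring
  have e3 : ∑ i, f i * μ i * f i = ∑ i, f i ^ 2 * μ i :=
    Finset.sum_congr rfl fun i _ => by ring
  linarith

lemma core_ineq (M Gm : Matrix ι ι ℝ) (μ : ι → ℝ) (Eb : ℝ) (hEb : 0 ≤ Eb)
    (hinv : (1 - M) * Gm = 1)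
    (hGsym : ∀ i j, μ i * Gm i j = μ j * Gm j i)
    (hGnn : ∀ i j, 0 ≤ Gm i j)
    (hrow : ∀ i, ∑ j, Gm i j ≤ Eb)
    (hMs : ∀ i j, μ i * M i j = μ j * M j i)
    (hMnn : ∀ i j, 0 ≤ μ i * M i j)
    (hμnn : ∀ i, 0 ≤ μ i)
    (hrowM : ∀ i, ∑ j, μ i * M i j ≤ μ i)
    (f : ι → ℝ) :
    ∑ i, f i ^ 2 * μ i ≤ Eb * bform M μ f f := by
  set g := Gm.mulVec f with hg
  have hfg : ∀ i, g i - M.mulVec g i = f i := by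
    intro i
    have h1 : (1 - M).mulVec g = f := by
      rw [hg, Matrix.mulVec_mulVec, hinv, Matrix.one_mulVec]
    have h2 := congrFun h1 i
    rwa [Matrix.sub_mulVec, Matrix.one_mulVec, Pi.sub_apply] at h2
  have key1 : bform M μ f g = ∑ i, f i ^ 2 * μ i := by
    rw [bform]
    exact Finset.sum_congr rfl fun i _ => by rw [hfg i]; ring
  have key2 : bform M μ g g = ∑ i, ∑ j, (μ i * Gm i j) * (f i * f j) := by
    rw [bform]
    refine Finset.sum_congr rfl fun i _ => ?_
    rw [hfg i, hg]
    simp only [Matrix.mulVec, dotProduct]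
    rw [Finset.sum_mul, Finset.sum_mul]
    exact Finset.sum_congr rfl fun j _ => by ring
  have key3 : ∑ i, ∑ j, (μ i * Gm i j) * (f i * f j) ≤ Eb * ∑ i, f i ^ 2 * μ i := by
    have h2 : ∀ i j : ι, (μ i * Gm i j) * (f i * f j)
        ≤ (μ i * Gm i j) * ((f i ^ 2 + f j ^ 2) / 2) := fun i j =>
      mul_le_mul_of_nonneg_left (by nlinarith [sq_nonneg (f i - f j)])
        (mul_nonneg (hμnn i) (hGnn i j))
    calc ∑ i, ∑ j, (μ i * Gm i j) * (f i * f j)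
        ≤ ∑ i, ∑ j, (μ i * Gm i j) * ((f i ^ 2 + f j ^ 2) / 2) :=
          Finset.sum_le_sum fun i _ => Finset.sum_le_sum fun j _ => h2 i j
      _ = ∑ i, ∑ j, (μ i * Gm i j) * f i ^ 2 :=
          sum_half_symm (fun i j => μ i * Gm i j)
            (fun i j => hGsym i j) (fun k => f k ^ 2)
      _ ≤ Eb * ∑ i, f i ^ 2 * μ i := by
          rw [Finset.mul_sum]
          refine Finset.sum_le_sum fun i _ => ?_
          have hh : ∑ j, (μ i * Gm i j) * f i ^ 2 = (μ i * f i ^ 2) * ∑ j, Gm i j := by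
            rw [Finset.mul_sum]
            exact Finset.sum_congr rfl fun j _ => by ring
          rw [hh]
          calc (μ i * f i ^ 2) * ∑ j, Gm i j ≤ (μ i * f i ^ 2) * Eb :=
                mul_le_mul_of_nonneg_left (hrow i) (mul_nonneg (hμnn i) (sq_nonneg _))
            _ = Eb * (f i ^ 2 * μ i) := by ring
  have hCS := bform_cs M μ hMs hMnn hrowM f g
  rw [key1] at hCS
  have hNnn : 0 ≤ ∑ i, f i ^ 2 * μ i :=
    Finset.sum_nonneg fun i _ => mul_nonneg (sq_nonneg _) (hμnn i)
  have hBff : 0 ≤ bform M μ f f := bform_nonneg M μ hMs hMnn hrowM f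
  have hBgg_le : bform M μ g g ≤ Eb * ∑ i, f i ^ 2 * μ i := by
    rw [key2]; exact key3
  rcases eq_or_lt_of_le hNnn with h|h
  · rw [← h]; exact mul_nonneg hEb hBff
  · nlinarith [hCS, hBgg_le, hBff, hEb, h,
      mul_le_mul_of_nonneg_left hBgg_le hBff]

end Core

section Main
variable {V : Type} (G : WGraph V)

lemma muSet_coe_finset (t : Finset V) : G.muSet ↑t = ∑ v ∈ t, G.mu v := by
  rw [WGraph.muSet, tsum_subtype]
  rw [tsum_eq_sum (s := t) (fun b hb => Set.indicator_of_notMem (by simpa using hb) _)]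
  exact Finset.sum_congr rfl fun v hv => Set.indicator_of_mem (by simpa using hv) _

lemma wsum_le {v : V} (hμtop : G.mu v ≠ ⊤) (t : Finset V) :
    ∑ u ∈ t, G.w v u ≤ (G.mu v).toReal := by
  have h1 : ∑ u ∈ t, ENNReal.ofReal (G.w v u) ≤ G.mu v := ENNReal.sum_le_tsum t
  calc ∑ u ∈ t, G.w v u = ∑ u ∈ t, (ENNReal.ofReal (G.w v u)).toReal :=
        Finset.sum_congr rfl fun u _ => (ENNReal.toReal_ofReal (G.nonneg v u)).symm
    _ ≤ (G.mu v).toReal := by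
        rw [← ENNReal.toReal_sum (fun u _ => ENNReal.ofReal_ne_top)]
        exact ENNReal.toReal_mono hμtop h1



lemma wsum_eq_of_no_leak {v : V} (hμtop : G.mu v ≠ ⊤) (t : Finset V)
    (h : ∀ b ∉ t, G.w v b = 0) :
    ∑ u ∈ t, G.w v u = (G.mu v).toReal := by
  have h1 : G.mu v = ∑ u ∈ t, ENNReal.ofReal (G.w v u) :=
    tsum_eq_sum (fun b hb => by rw [h b hb]; simp)
  rw [h1, ENNReal.toReal_sum (fun u _ => ENNReal.ofReal_ne_top)]
  exact Finset.sum_congr rfl fun u _ => (ENNReal.toReal_ofReal (G.nonneg v u)).symm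

end Main

/-- `(p₀)+(VD)+(Ē)` imply `E(x,R) ≥ c R²`. -/
theorem stmt18 (V : Type) [Infinite V] (G : WGraph V)
    (hconn : G.toSimpleGraph.Connected)
    (p₀ : ℝ) (hp : 0 < p₀) (h0 : G.P0 p₀)
    (hVD : ∃ D : ℝ, 0 < D ∧ G.VD D)
    (hEbar : ∃ C : ℝ, 0 < C ∧ ∀ (x : V) (R : ℝ), 0 < R →
      G.Ebar x R ≤ ENNReal.ofReal C * G.E x R) :
    ∃ c : ℝ, 0 < c ∧ ∀ (x : V) (R : ℝ), 0 < R →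
      ENNReal.ofReal (c * R ^ 2) ≤ G.E x R := by
  obtain ⟨D, hD, hVDD⟩ := hVD
  obtain ⟨C, hC, hEbarC⟩ := hEbar
  refine ⟨1 / (6 * C * D), by positivity, ?_⟩
  intro x R hR
  by_cases hEtop : G.E x R = ⊤
  · rw [hEtop]; exact le_top
  have hμ : ∀ v : V, 0 < G.mu v ∧ G.mu v ≠ ⊤ := fun v => by
    obtain ⟨y, hy⟩ := exists_adj G hconn v
    exact ⟨mu_pos_of_adj G hy, mu_ne_top_of_adj G hp h0 hy⟩
  have hA : (G.ball x R).Finite := ball_finite G hconn hp h0 x R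
  set s : Finset V := hA.toFinset with hs
  have hsA : (↑s : Set V) = G.ball x R := hA.coe_toFinset
  have hxball : x ∈ G.ball x R := by
    show ((G.dist x x : ℕ) : ℝ) < R
    rw [WGraph.dist, SimpleGraph.dist_self]
    simpa using hR
  have hxs : x ∈ s := hA.mem_toFinset.mpr hxball
  have hmem : ∀ i : {v // v ∈ s}, (i : V) ∈ G.ball x R := fun i => by
    rw [← hsA]; exact Finset.mem_coe.mpr i.2
  have hexit : ∀ i : {v // v ∈ s}, G.exitE (↑s) (i : V) ≤ G.Ebar x R := fun i => by
    rw [hsA]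
    exact le_iSup₂ (f := fun z (_ : z ∈ G.ball x R) => G.exitE (G.ball x R) z)
      (i : V) (hmem i)
  have hEbtop : G.Ebar x R ≠ ⊤ :=
    ne_top_of_le_ne_top (ENNReal.mul_ne_top ENNReal.ofReal_ne_top hEtop) (hEbarC x R hR)
  have hfin : ∀ i : {v // v ∈ s}, G.exitE (↑s) (i : V) ≠ ⊤ :=
    fun i => ne_top_of_le_ne_top hEbtop (hexit i)
  set μf : {v // v ∈ s} → ℝ := fun i => (G.mu (i : V)).toReal with hμf
  have hμne : ∀ v : V, (G.mu v).toReal ≠ 0 :=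
    fun v => (ENNReal.toReal_pos (hμ v).1.ne' (hμ v).2).ne'
  have hw : ∀ i j : {v // v ∈ s}, μf i * kmat G s i j = G.w (i : V) (j : V) := by
    intro i j
    show (G.mu (i : V)).toReal * (G.w (i : V) (j : V) / (G.mu (i : V)).toReal) = _
    rw [mul_comm, div_mul_cancel₀ _ (hμne (i : V))]
  have hMs : ∀ i j, μf i * kmat G s i j = μf j * kmat G s j i := by
    intro i j; rw [hw, hw, G.symm]
  have hMnn : ∀ i j, 0 ≤ μf i * kmat G s i j := fun i j => by
    rw [hw]; exact G.nonneg _ _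
  have hrowM : ∀ i, ∑ j, μf i * kmat G s i j ≤ μf i := by
    intro i
    rw [Finset.sum_congr rfl (fun j _ => hw i j),
      Finset.sum_coe_sort s (fun v => G.w (i : V) v)]
    exact wsum_le G (hμ _).2 s
  set Eb := (G.Ebar x R).toReal with hEbdef
  have hrow : ∀ i, ∑ j, gmat G s i j ≤ Eb := fun i =>
    (gmat_rowsum_le G s hμ hfin i).trans (ENNReal.toReal_mono hEbtop (hexit i))
  set f : {v // v ∈ s} → ℝ := fun i => max (R - (G.dist x (i : V) : ℝ)) 0 with hf
  have hfnn : ∀ i, 0 ≤ f i := fun i => le_max_right _ _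
  have hcore := core_ineq (kmat G s) (gmat G s) μf Eb ENNReal.toReal_nonneg
    (inv_mul_gmat G s hμ hfin) (gmat_symm G s hμ) (gmat_nonneg G s) hrow hMs hMnn
    (fun i => ENNReal.toReal_nonneg) hrowM f
  set V1 : ℝ := ∑ i : {v // v ∈ s}, μf i with hV1
  -- Lipschitz bound on the Dirichlet part
  have hterm1 : (∑ i, ∑ j, (μf i * kmat G s i j) * (f i - f j) ^ 2) ≤ V1 := by
    have hper : ∀ i j : {v // v ∈ s},
        (μf i * kmat G s i j) * (f i - f j) ^ 2 ≤ μf i * kmat G s i j := by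
      intro i j
      rcases eq_or_lt_of_le (G.nonneg (i : V) (j : V)) with h|h
      · rw [hw, ← h]; simp
      · have hne : (i : V) ≠ (j : V) := by
          intro he; rw [he, G.loopless] at h; exact lt_irrefl _ h
        have hadj : G.toSimpleGraph.Adj (i : V) (j : V) := ⟨hne, h⟩
        have hd1 : G.toSimpleGraph.dist (i : V) (j : V) ≤ 1 := by
          have hl := SimpleGraph.dist_le (SimpleGraph.Walk.cons hadj SimpleGraph.Walk.nil)
          simpa using hl
        have hd1' : G.toSimpleGraph.dist (j : V) (i : V) ≤ 1 := by
          rwa [SimpleGraph.dist_comm] at hd1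
        have htri1 : (G.dist x (j : V) : ℝ) ≤ (G.dist x (i : V) : ℝ) + 1 := by
          have := (hconn.dist_triangle (u := x) (v := (i : V)) (w := (j : V))).trans
            (Nat.add_le_add_left hd1 _)
          rw [WGraph.dist, WGraph.dist]
          exact_mod_cast this
        have htri2 : (G.dist x (i : V) : ℝ) ≤ (G.dist x (j : V) : ℝ) + 1 := by
          have := (hconn.dist_triangle (u := x) (v := (j : V)) (w := (i : V))).trans
            (Nat.add_le_add_left hd1' _)
          rw [WGraph.dist, WGraph.dist]
          exact_mod_cast this
        have habs : |f i - f j| ≤ 1 := by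
          have h1 := abs_max_sub_max_le_abs (R - (G.dist x (i : V) : ℝ))
            (R - (G.dist x (j : V) : ℝ)) (0 : ℝ)
          have h2 : |(R - (G.dist x (i : V) : ℝ)) - (R - (G.dist x (j : V) : ℝ))| ≤ 1 :=
            abs_le.mpr ⟨by linarith, by linarith⟩
          exact (h1.trans h2)
        have hsq : (f i - f j) ^ 2 ≤ 1 := by
          have := abs_le.mp habs
          nlinarith [this.1, this.2]
        calc (μf i * kmat G s i j) * (f i - f j) ^ 2
            ≤ (μf i * kmat G s i j) * 1 := mul_le_mul_of_nonneg_left hsq (hMnn i j)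
          _ = μf i * kmat G s i j := mul_one _
    calc (∑ i, ∑ j, (μf i * kmat G s i j) * (f i - f j) ^ 2)
        ≤ ∑ i, ∑ j, μf i * kmat G s i j :=
          Finset.sum_le_sum fun i _ => Finset.sum_le_sum fun j _ => hper i j
      _ ≤ ∑ i, μf i := Finset.sum_le_sum fun i _ => hrowM i
      _ = V1 := rfl
  have hterm2 : ∑ i, f i ^ 2 * (μf i - ∑ j, μf i * kmat G s i j) ≤ V1 := by
    refine Finset.sum_le_sum fun i _ => ?_
    have hLnn : 0 ≤ μf i - ∑ j, μf i * kmat G s i j := sub_nonneg.mpr (hrowM i)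
    have hwm_nn : 0 ≤ ∑ j, μf i * kmat G s i j :=
      Finset.sum_nonneg fun j _ => hMnn i j
    by_cases hleak : ∃ b, b ∉ G.ball x R ∧ 0 < G.w (i : V) b
    · obtain ⟨b, hbA, hbw⟩ := hleak
      have hbne : (i : V) ≠ b := by
        intro he; rw [he, G.loopless] at hbw; exact lt_irrefl _ hbw
      have hadj : G.toSimpleGraph.Adj (i : V) b := ⟨hbne, hbw⟩
      have hdb : R ≤ (G.dist x b : ℝ) := le_of_not_gt (by simpa [WGraph.ball] using hbA)
      have hd1 : G.toSimpleGraph.dist (i : V) b ≤ 1 := by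
        have hl := SimpleGraph.dist_le (SimpleGraph.Walk.cons hadj SimpleGraph.Walk.nil)
        simpa using hl
      have htri : (G.dist x b : ℝ) ≤ (G.dist x (i : V) : ℝ) + 1 := by
        have := (hconn.dist_triangle (u := x) (v := (i : V)) (w := b)).trans
          (Nat.add_le_add_left hd1 _)
        rw [WGraph.dist, WGraph.dist]
        exact_mod_cast this
      have hfle : f i ≤ 1 := max_le (by linarith) (by norm_num)
      have hsq : f i ^ 2 ≤ 1 := by nlinarith [hfnn i]
      calc f i ^ 2 * (μf i - ∑ j, μf i * kmat G s i j)
          ≤ 1 * (μf i - ∑ j, μf i * kmat G s i j) :=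
            mul_le_mul_of_nonneg_right hsq hLnn
        _ = μf i - ∑ j, μf i * kmat G s i j := one_mul _
        _ ≤ μf i := by linarith
    · push_neg at hleak
      have hzero : ∀ b ∉ s, G.w (i : V) b = 0 := fun b hb =>
        le_antisymm (hleak b (by rw [← hsA]; simpa using hb)) (G.nonneg _ _)
      have heq : ∑ j, μf i * kmat G s i j = μf i := by
        rw [Finset.sum_congr rfl (fun j _ => hw i j),
          Finset.sum_coe_sort s (fun v => G.w (i : V) v)]
        exact wsum_eq_of_no_leak G (hμ _).2 s hzero
      rw [heq, sub_self, mul_zero]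
      exact ENNReal.toReal_nonneg
  have hEN : bform (kmat G s) μf f f ≤ (3 / 2) * V1 := by
    rw [bform_dirichlet (kmat G s) μf hMs f]
    linarith
  -- lower bound on the norm
  set t : Finset V := s.filter (fun v => ((G.dist x v : ℕ) : ℝ) < R / 2) with ht
  have hNRM : (R / 2) ^ 2 * ∑ v ∈ t, (G.mu v).toReal ≤ ∑ i, f i ^ 2 * μf i := by
    rw [show (∑ i : {v // v ∈ s}, f i ^ 2 * μf i)
        = ∑ v ∈ s, (max (R - (G.dist x v : ℝ)) 0) ^ 2 * (G.mu v).toReal from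
      Finset.sum_coe_sort s (fun v => (max (R - (G.dist x v : ℝ)) 0) ^ 2 * (G.mu v).toReal)]
    rw [Finset.mul_sum]
    refine le_trans (Finset.sum_le_sum ?_)
      (Finset.sum_le_sum_of_subset_of_nonneg (Finset.filter_subset _ _) ?_)
    · intro v hv
      have hvd : ((G.dist x v : ℕ) : ℝ) < R / 2 := (Finset.mem_filter.mp hv).2
      have hge : R / 2 ≤ max (R - (G.dist x v : ℝ)) 0 :=
        le_max_of_le_left (by linarith)
      have h2 : (R / 2) ^ 2 ≤ (max (R - (G.dist x v : ℝ)) 0) ^ 2 := by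
        have hh : (0 : ℝ) ≤ R / 2 := by linarith
        nlinarith
      exact mul_le_mul_of_nonneg_right h2 ENNReal.toReal_nonneg
    · intro v _ _
      positivity
  -- volumes
  have hvol1 : (G.vol x R).toReal = V1 := by
    rw [WGraph.vol, ← hsA, muSet_coe_finset,
      ENNReal.toReal_sum (fun v _ => (hμ v).2), hV1,
      ← Finset.sum_coe_sort s (fun v => (G.mu v).toReal)]
  have hballhalf : G.ball x (R / 2) = ↑t := by
    ext v
    simp only [WGraph.ball, Set.mem_setOf_eq, ht, Finset.coe_filter,
      Set.mem_setOf_eq, hA.mem_toFinset]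
    constructor
    · intro hv
      exact ⟨hA.mem_toFinset.mpr (by show ((G.dist x v : ℕ) : ℝ) < R; linarith), hv⟩
    · intro hv; exact hv.2
  have hvol2 : (G.vol x (R / 2)).toReal = ∑ v ∈ t, (G.mu v).toReal := by
    rw [WGraph.vol, hballhalf, muSet_coe_finset,
      ENNReal.toReal_sum (fun v _ => (hμ v).2)]
  have hvol2top : G.vol x (R / 2) ≠ ⊤ := by
    rw [WGraph.vol, hballhalf, muSet_coe_finset]
    exact (ENNReal.sum_lt_top.mpr (fun v _ => (hμ v).2.lt_top)).ne
  have hVDchain : V1 ≤ D * ∑ v ∈ t, (G.mu v).toReal := by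
    have h1 := hVDD x (R / 2) (by linarith)
    rw [show 2 * (R / 2) = R by ring] at h1
    have h2 := ENNReal.toReal_mono
      (ENNReal.mul_ne_top ENNReal.ofReal_ne_top hvol2top) h1
    rw [ENNReal.toReal_mul, ENNReal.toReal_ofReal hD.le, hvol1, hvol2] at h2
    exact h2
  have hV2pos : 0 < ∑ v ∈ t, (G.mu v).toReal := by
    have hxt : x ∈ t := Finset.mem_filter.mpr ⟨hxs, by
      rw [WGraph.dist, SimpleGraph.dist_self]; simpa using hR⟩
    have hxpos : 0 < (G.mu x).toReal := ENNReal.toReal_pos (hμ x).1.ne' (hμ x).2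
    exact Finset.sum_pos' (fun v _ => ENNReal.toReal_nonneg) ⟨x, hxt, hxpos⟩
  have hEbC : Eb ≤ C * (G.E x R).toReal := by
    have h2 := ENNReal.toReal_mono
      (ENNReal.mul_ne_top ENNReal.ofReal_ne_top hEtop) (hEbarC x R hR)
    rwa [ENNReal.toReal_mul, ENNReal.toReal_ofReal hC.le] at h2
  -- final arithmetic
  set Er := (G.E x R).toReal with hEr
  set V2 := ∑ v ∈ t, (G.mu v).toReal with hV2
  have hV1nn : 0 ≤ V1 := Finset.sum_nonneg fun i _ => ENNReal.toReal_nonneg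
  have hErnn : 0 ≤ Er := ENNReal.toReal_nonneg
  have step1 : ∑ i, f i ^ 2 * μf i ≤ Eb * ((3 / 2) * V1) :=
    hcore.trans (mul_le_mul_of_nonneg_left hEN ENNReal.toReal_nonneg)
  have step2 : Eb * ((3 / 2) * V1) ≤ (C * Er) * ((3 / 2) * V1) :=
    mul_le_mul_of_nonneg_right hEbC (by positivity)
  have step3 : (C * Er) * ((3 / 2) * V1) ≤ (C * Er) * ((3 / 2) * (D * V2)) := by
    refine mul_le_mul_of_nonneg_left ?_ (mul_nonneg hC.le hErnn)
    linarith
  have total : (R / 2) ^ 2 * V2 ≤ (C * Er) * ((3 / 2) * (D * V2)) := by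
    calc (R / 2) ^ 2 * V2 ≤ ∑ i, f i ^ 2 * μf i := hNRM
      _ ≤ Eb * ((3 / 2) * V1) := step1
      _ ≤ (C * Er) * ((3 / 2) * V1) := step2
      _ ≤ (C * Er) * ((3 / 2) * (D * V2)) := step3
  have h6 : (R / 2) ^ 2 ≤ (C * Er) * ((3 / 2) * D) := by
    have h7 : (R / 2) ^ 2 * V2 ≤ ((C * Er) * ((3 / 2) * D)) * V2 := by
      calc (R / 2) ^ 2 * V2 ≤ (C * Er) * ((3 / 2) * (D * V2)) := total
        _ = ((C * Er) * ((3 / 2) * D)) * V2 := by ring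
    exact le_of_mul_le_mul_right (by linarith [h7]) hV2pos
  have hfinal : 1 / (6 * C * D) * R ^ 2 ≤ Er := by
    rw [show 1 / (6 * C * D) * R ^ 2 = R ^ 2 / (6 * C * D) by ring,
      div_le_iff₀ (by positivity)]
    nlinarith [h6]
  exact ENNReal.ofReal_le_of_le_toReal hfinal
end
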